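/- Let n ≥ 3, let Ω ⊆ ℝⁿ be a bounded open set, let K ⊆ Ω be a compact set, let m ≥ 1 and M ≥ 0. Then there exists a constant C > 0, depending only on n, M, K and Ω (and not on ε), such that for every ε > 0 and every m-tuple of twice continuously differentiable functions u_1,…,u_m on Ω satisfying 0 ≤ u_i(x) ≤ M and Δu_i(x) = (1/ε)·∏_{j=1}^m u_j(x) for all i and x ∈ Ω, one has ∫_K (1/ε)·∏_{j=1}^m u_j(x) dx ≤ C. -/

import Mathlib

open MeasureTheory Metric Finset

/-- The Laplace operator: sum of pure second partial derivatives
(trace of the second derivative). -/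
noncomputable def laplacian {n : ℕ} (u : EuclideanSpace ℝ (Fin n) → ℝ)
    (x : EuclideanSpace ℝ (Fin n)) : ℝ :=
  ∑ i, iteratedFDeriv ℝ 2 u x ![EuclideanSpace.single i 1, EuclideanSpace.single i 1]

open Manifold Set in
/-- Smooth cutoff: `φ = 1` on the compact set `K`, `0 ≤ φ ≤ 1`, compactly supported
inside the open set `U`. -/
lemma exists_cutoff {n : ℕ} {K U : Set (EuclideanSpace ℝ (Fin n))}
    (hK : IsCompact K) (hU : IsOpen U) (hKU : K ⊆ U) :
    ∃ φ : EuclideanSpace ℝ (Fin n) → ℝ, (∀ N : ℕ, ContDiff ℝ N φ) ∧ HasCompactSupport φ ∧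
      Set.EqOn φ 1 K ∧ (∀ x, φ x ∈ Set.Icc (0:ℝ) 1) ∧ tsupport φ ⊆ U := by
  obtain ⟨L, Lc, hKL, hLU⟩ := exists_compact_between hK hU hKU
  obtain ⟨φ, hφ0, hφ1, hφ01⟩ := exists_contMDiffMap_zero_one_of_isClosed 𝓘(ℝ, EuclideanSpace ℝ (Fin n)) (n := ⊤)
    (isOpen_interior.isClosed_compl) hK.isClosed
    (disjoint_compl_left_iff_subset.2 hKL)
  have hsupp : tsupport φ ⊆ L := by
    apply (closure_mono ?_).trans (closure_minimal interior_subset Lc.isClosed)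
    intro x hx
    by_contra h
    exact hx (hφ0 h)
  refine ⟨φ, fun N ↦ (contMDiff_iff_contDiff.1 φ.contMDiff).of_le
      (by exact_mod_cast ENat.natCast_le_of_coe_top_le_withTop le_rfl N),
    Lc.of_isClosed_subset (isClosed_tsupport _) hsupp, hφ1, hφ01, hsupp.trans hLU⟩

/-- Second directional derivative of the composition with evaluation. -/
lemma fderiv_fderiv_apply {n : ℕ} (g : EuclideanSpace ℝ (Fin n) → ℝ)
    (x v : EuclideanSpace ℝ (Fin n)) (h : DifferentiableAt ℝ (fderiv ℝ g) x) :
    fderiv ℝ (fun y ↦ fderiv ℝ g y v) x v = fderiv ℝ (fderiv ℝ g) x v v := by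
  have h1 : HasFDerivAt (fun y ↦ fderiv ℝ g y v)
      ((ContinuousLinearMap.apply ℝ ℝ v).comp (fderiv ℝ (fderiv ℝ g) x)) x :=
    (ContinuousLinearMap.apply ℝ ℝ v).hasFDerivAt.comp x h.hasFDerivAt
  rw [h1.fderiv]
  rfl

theorem stmt8 {n : ℕ} (hn : 3 ≤ n)
    (Ω : Set (EuclideanSpace ℝ (Fin n))) (hΩo : IsOpen Ω)
    (hΩb : Bornology.IsBounded Ω)
    (K : Set (EuclideanSpace ℝ (Fin n))) (hK : IsCompact K) (hKΩ : K ⊆ Ω)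
    (m : ℕ) (hm : 1 ≤ m) (M : ℝ) (hM : 0 ≤ M) :
    ∃ C : ℝ, 0 < C ∧
      ∀ ε : ℝ, 0 < ε →
        ∀ u : Fin m → EuclideanSpace ℝ (Fin n) → ℝ,
          (∀ i, ContDiffOn ℝ 2 (u i) Ω) →
          (∀ i, ∀ x ∈ Ω, 0 ≤ u i x ∧ u i x ≤ M) →
          (∀ i, ∀ x ∈ Ω, laplacian (u i) x = (1 / ε) * ∏ j, u j x) →
          ∫ x in K, (1 / ε) * ∏ j, u j x ≤ C := by
  -- compact set L₁ with K ⊆ interior L₁, L₁ ⊆ Ω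
  obtain ⟨L₁, L₁c, hKL₁, hL₁Ω⟩ := exists_compact_between hK hΩo hKΩ
  -- cutoff φ : 1 on K, supported in interior L₁
  obtain ⟨φ, hφN, hφc, hφ1, hφ01, hφsupp⟩ := exists_cutoff hK isOpen_interior hKL₁
  -- cutoff ψ : 1 on L₁, supported in Ω
  obtain ⟨ψ, hψN, hψc, hψ1, hψ01, hψsupp⟩ := exists_cutoff L₁c hΩo hL₁Ω
  have hL₁Ω' : interior L₁ ⊆ Ω := interior_subset.trans hL₁Ω
  set e : Fin n → EuclideanSpace ℝ (Fin n) := fun i ↦ EuclideanSpace.single i 1 with he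
  -- second derivatives of φ
  set Φ : Fin n → EuclideanSpace ℝ (Fin n) → ℝ := fun i x ↦ fderiv ℝ (fderiv ℝ φ) x (e i) (e i) with hΦ
  have hφ_smooth : ∀ N : ℕ, ContDiff ℝ N φ := hφN
  have hφd : Differentiable ℝ φ := (hφN 1).differentiable (by norm_num)
  have hφ_fd_cont : Continuous (fderiv ℝ φ) := ((hφN 2).fderiv_right (m := 1) (by norm_num)).continuous
  have hφ_fd_diff : Differentiable ℝ (fderiv ℝ φ) :=
    ((hφN 2).fderiv_right (m := 1) (by norm_num)).differentiable (by norm_num)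
  have hΦcont : ∀ i, Continuous (Φ i) := fun i ↦
    ((((hφN 3).fderiv_right (m := 2) (by norm_num)).fderiv_right (m := 1)
      (by norm_num)).continuous.clm_apply continuous_const).clm_apply continuous_const
  have hΦsupp : ∀ i, HasCompactSupport (Φ i) := fun i ↦
    ((hφc.fderiv ℝ).fderiv_apply ℝ (e i)).comp_left
      (g := fun L : EuclideanSpace ℝ (Fin n) →L[ℝ] ℝ ↦ L (e i)) rfl
  -- the constant
  refine ⟨M * (∑ i, ∫ x, |Φ i x|) + 1, ?_, ?_⟩
  · have : 0 ≤ ∑ i, ∫ x, |Φ i x| :=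
      Finset.sum_nonneg fun i _ ↦ integral_nonneg fun x ↦ abs_nonneg _
    nlinarith
  intro ε hε u hu_smooth hu_bd hu_lap
  set f : EuclideanSpace ℝ (Fin n) → ℝ := fun x ↦ (1 / ε) * ∏ j, u j x with hf
  have hf_nonneg : ∀ x ∈ Ω, 0 ≤ f x := fun x hx ↦
    mul_nonneg (by positivity) (Finset.prod_nonneg fun j _ ↦ (hu_bd j x hx).1)
  have hf_contOn : ContinuousOn f Ω :=
    continuousOn_const.mul (continuousOn_finset_prod _ fun j _ ↦ (hu_smooth j).continuousOn)
  -- the localized function w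
  set i₀ : Fin m := ⟨0, hm⟩ with hi₀
  set w : EuclideanSpace ℝ (Fin n) → ℝ := fun x ↦ ψ x * u i₀ x with hwdef
  have hψΩ : ∀ x, x ∉ Ω → ψ x = 0 := by
    intro x hx
    by_contra h
    exact hx (hψsupp (subset_tsupport ψ h))
  have hw : ContDiff ℝ 2 w := by
    rw [← contDiffOn_univ]
    intro x _
    by_cases hx : x ∈ Ω
    · exact (((((hψN 2).contDiffOn (s := Ω)).mul (hu_smooth i₀)).contDiffAt
        (hΩo.mem_nhds hx))).contDiffWithinAt
    · have hx' : x ∈ (tsupport ψ)ᶜ := fun h ↦ hx (hψsupp h)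
      have : w =ᶠ[nhds x] (fun _ ↦ 0) := by
        filter_upwards [(isClosed_tsupport ψ).isOpen_compl.mem_nhds hx'] with y hy
        have : ψ y = 0 := image_eq_zero_of_notMem_tsupport hy
        simp [hwdef, this]
      exact (contDiffAt_const.congr_of_eventuallyEq this).contDiffWithinAt
  have hw_bd : ∀ x, 0 ≤ w x ∧ w x ≤ M := by
    intro x
    by_cases hx : x ∈ Ω
    · obtain ⟨h1, h2⟩ := hu_bd i₀ x hx
      obtain ⟨h3, h4⟩ := hψ01 x
      constructor
      · exact mul_nonneg h3 h1
      · calc ψ x * u i₀ x ≤ 1 * M := mul_le_mul h4 h2 h1 zero_le_one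
          _ = M := one_mul M
    · simp [hwdef, hψΩ x hx, hM]
  have hw_fd_diff : Differentiable ℝ (fderiv ℝ w) :=
    (hw.fderiv_right (m := 1) (by norm_num)).differentiable (by norm_num)
  have hw_fd_cont : Continuous (fderiv ℝ w) := (hw.fderiv_right (m := 1) (by norm_num)).continuous
  have hw_fd2_cont : Continuous (fderiv ℝ (fderiv ℝ w)) :=
    (hw.fderiv_right (m := 1) (by norm_num)).continuous_fderiv (by norm_num)
  -- the (global) second derivative sum
  set D : EuclideanSpace ℝ (Fin n) → ℝ := fun x ↦ ∑ i, fderiv ℝ (fderiv ℝ w) x (e i) (e i) with hD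
  have hDcont : Continuous D :=
    continuous_finset_sum _ fun i _ ↦
      (hw_fd2_cont.clm_apply continuous_const).clm_apply continuous_const
  -- on interior L₁, D agrees with the reaction term
  have hDeq : ∀ x ∈ interior L₁, D x = f x := by
    intro x hx
    have hΩx : x ∈ Ω := hL₁Ω' hx
    have hwev : w =ᶠ[nhds x] u i₀ := by
      filter_upwards [isOpen_interior.mem_nhds hx] with y hy
      simp [hwdef, hψ1 (interior_subset hy)]
    have h2 : fderiv ℝ (fderiv ℝ w) x = fderiv ℝ (fderiv ℝ (u i₀)) x :=
      (hwev.fderiv).fderiv_eq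
    have : D x = laplacian (u i₀) x := by
      simp only [hD, h2, laplacian, iteratedFDeriv_two_apply, Matrix.cons_val_zero,
        Matrix.cons_val_one, Matrix.head_cons]
      rfl
    rw [this, hu_lap i₀ x hΩx]
  have hφ0 : ∀ x, x ∉ interior L₁ → φ x = 0 := by
    intro x hx
    by_contra h
    exact hx (hφsupp (subset_tsupport φ h))
  -- Step A : ∫_K f ≤ ∫ φ * D
  have hφD_int : Integrable (fun x ↦ φ x * D x) := by
    apply Continuous.integrable_of_hasCompactSupport (((hφN 1).continuous).mul hDcont)
    exact hφc.mul_right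
  have stepA : ∫ x in K, f x ≤ ∫ x, φ x * D x := by
    rw [← integral_indicator hK.measurableSet]
    apply integral_mono ((hf_contOn.mono hKΩ |>.integrableOn_compact hK).integrable_indicator
      hK.measurableSet) hφD_int
    intro x
    by_cases hx : x ∈ K
    · have h1 : φ x = 1 := hφ1 hx
      have h2 : D x = f x := hDeq x (hKL₁ hx)
      simp [Set.indicator_of_mem hx, h1, h2]
    · rw [Set.indicator_of_notMem hx]
      by_cases hx' : x ∈ interior L₁
      · exact mul_nonneg (hφ01 x).1 (hDeq x hx' ▸ hf_nonneg x (hL₁Ω' hx'))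
      · simp [hφ0 x hx']
  -- Step B/C : integration by parts in each direction
  have stepC : ∀ i : Fin n,
      ∫ x, φ x * fderiv ℝ (fderiv ℝ w) x (e i) (e i) = ∫ x, Φ i x * w x := by
    intro i
    set v : EuclideanSpace ℝ (Fin n) := e i
    have hfdw_cont : Continuous (fun x ↦ fderiv ℝ w x v) :=
      hw_fd_cont.clm_apply continuous_const
    have hfdφ_cont : Continuous (fun x ↦ fderiv ℝ φ x v) :=
      hφ_fd_cont.clm_apply continuous_const
    have hfd2w_cont : Continuous (fun x ↦ fderiv ℝ (fderiv ℝ w) x v v) :=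
      (hw_fd2_cont.clm_apply continuous_const).clm_apply continuous_const
    have hfdφ_supp : HasCompactSupport (fun x ↦ fderiv ℝ φ x v) := hφc.fderiv_apply ℝ v
    have hg_diff : Differentiable ℝ (fun y ↦ fderiv ℝ w y v) :=
      fun x ↦ ((ContinuousLinearMap.apply ℝ ℝ v).hasFDerivAt.comp x
        (hw_fd_diff x).hasFDerivAt).differentiableAt
    have hgφ_diff : Differentiable ℝ (fun y ↦ fderiv ℝ φ y v) :=
      fun x ↦ ((ContinuousLinearMap.apply ℝ ℝ v).hasFDerivAt.comp x
        (hφ_fd_diff x).hasFDerivAt).differentiableAt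
    have key_w : ∀ x, fderiv ℝ (fun y ↦ fderiv ℝ w y v) x v = fderiv ℝ (fderiv ℝ w) x v v :=
      fun x ↦ fderiv_fderiv_apply w x v (hw_fd_diff x)
    have key_φ : ∀ x, fderiv ℝ (fun y ↦ fderiv ℝ φ y v) x v = fderiv ℝ (fderiv ℝ φ) x v v :=
      fun x ↦ fderiv_fderiv_apply φ x v (hφ_fd_diff x)
    have ibp1 : ∫ x, φ x * fderiv ℝ (fun y ↦ fderiv ℝ w y v) x v
        = - ∫ x, fderiv ℝ φ x v * fderiv ℝ w x v := by
      apply integral_mul_fderiv_eq_neg_fderiv_mul_of_integrable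
      · exact Continuous.integrable_of_hasCompactSupport (hfdφ_cont.mul hfdw_cont)
          (hfdφ_supp.mul_right)
      · rw [show (fun x ↦ φ x * fderiv ℝ (fun y ↦ fderiv ℝ w y v) x v)
            = fun x ↦ φ x * fderiv ℝ (fderiv ℝ w) x v v from
            funext fun x ↦ by rw [key_w x]]
        exact Continuous.integrable_of_hasCompactSupport
          ((hφN 1).continuous.mul hfd2w_cont) hφc.mul_right
      · exact Continuous.integrable_of_hasCompactSupport ((hφN 1).continuous.mul hfdw_cont)
          hφc.mul_right
      · exact fun x _ ↦ hφd x
      · exact fun x _ ↦ hg_diff x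
    have ibp2 : ∫ x, fderiv ℝ φ x v * fderiv ℝ w x v
        = - ∫ x, fderiv ℝ (fun y ↦ fderiv ℝ φ y v) x v * w x := by
      apply integral_mul_fderiv_eq_neg_fderiv_mul_of_integrable
      · rw [show (fun x ↦ fderiv ℝ (fun y ↦ fderiv ℝ φ y v) x v * w x)
            = fun x ↦ Φ i x * w x from funext fun x ↦ by rw [key_φ x]]
        exact Continuous.integrable_of_hasCompactSupport
          ((hΦcont i).mul hw.continuous) ((hΦsupp i).mul_right)
      · exact Continuous.integrable_of_hasCompactSupport (hfdφ_cont.mul hfdw_cont)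
          (hfdφ_supp.mul_right)
      · exact Continuous.integrable_of_hasCompactSupport (hfdφ_cont.mul hw.continuous)
          (hfdφ_supp.mul_right)
      · exact fun x _ ↦ hgφ_diff x
      · exact fun x _ ↦ hw.differentiable (by norm_num) x
    calc ∫ x, φ x * fderiv ℝ (fderiv ℝ w) x v v
        = ∫ x, φ x * fderiv ℝ (fun y ↦ fderiv ℝ w y v) x v := by
          simp only [key_w]
      _ = - ∫ x, fderiv ℝ φ x v * fderiv ℝ w x v := ibp1
      _ = ∫ x, fderiv ℝ (fun y ↦ fderiv ℝ φ y v) x v * w x := by rw [ibp2, neg_neg]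
      _ = ∫ x, Φ i x * w x := by simp only [key_φ]; rfl
  -- Step D : bound each term
  have stepD : ∀ i : Fin n, ∫ x, Φ i x * w x ≤ (∫ x, |Φ i x|) * M := by
    intro i
    rw [← integral_mul_const]
    apply integral_mono
    · exact Continuous.integrable_of_hasCompactSupport ((hΦcont i).mul hw.continuous)
        ((hΦsupp i).mul_right)
    · exact Continuous.integrable_of_hasCompactSupport ((hΦcont i).abs.mul continuous_const)
        ((hΦsupp i).abs.mul_right)
    · intro x
      calc Φ i x * w x ≤ |Φ i x| * w x :=
            mul_le_mul_of_nonneg_right (le_abs_self _) (hw_bd x).1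
        _ ≤ |Φ i x| * M := mul_le_mul_of_nonneg_left (hw_bd x).2 (abs_nonneg _)
  -- assemble
  have hsum : ∫ x, φ x * D x = ∑ i, ∫ x, φ x * fderiv ℝ (fderiv ℝ w) x (e i) (e i) := by
    rw [← integral_finset_sum]
    · congr 1
      ext x
      rw [hD, Finset.mul_sum]
    · intro i _
      apply Continuous.integrable_of_hasCompactSupport
        ((hφN 1).continuous.mul ((hw_fd2_cont.clm_apply continuous_const).clm_apply
          continuous_const)) hφc.mul_right
  calc ∫ x in K, f x ≤ ∫ x, φ x * D x := stepA
    _ = ∑ i, ∫ x, φ x * fderiv ℝ (fderiv ℝ w) x (e i) (e i) := hsum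
    _ = ∑ i, ∫ x, Φ i x * w x := by simp only [funext fun i ↦ stepC i]
    _ ≤ ∑ i, (∫ x, |Φ i x|) * M := Finset.sum_le_sum fun i _ ↦ stepD i
    _ = M * (∑ i, ∫ x, |Φ i x|) := by rw [← Finset.sum_mul, mul_comm]
    _ ≤ M * (∑ i, ∫ x, |Φ i x|) + 1 := le_add_of_nonneg_right zero_le_one
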